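/- Fix an integer $r \ge 1$ and positive reals $\delta^{(0)}, \dots, \delta^{(r)}$. Suppose $r$ is odd. For each $k \ge 1$, define $T_k = \sum \binom{2k-2}{2n_0, \dots, 2n_{(r-1)/2}} \prod_{j=0}^{(r-1)/2} C_{n_j} \left(\delta^{(j)}\delta^{(r-j)}\right)^{n_j}$, where the sum is over tuples of nonnegative integers $(n_0, \dots, n_{(r-1)/2})$ summing to $k-1$ and $C_n$ is the $n$-th Catalan number. Then $\limsup_{k\to\infty} T_k^{1/(2k)} \ge \sum_{j=0}^{r} \sqrt{\delta^{(j)}\delta^{(r-j)}}$. -/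

import Mathlib

open scoped Nat


lemma cat_lb (n : ℕ) : 4 ^ n ≤ (2*n+2)^2 * catalan n := by
  have h1 : 4^n ≤ (2*n+2) * Nat.centralBinom n := by
    cases n with
    | zero => simp [Nat.centralBinom]
    | succ m =>
      calc 4^(m+1) ≤ 2*(m+1) * Nat.centralBinom (m+1) :=
            Nat.four_pow_le_two_mul_self_mul_centralBinom (m+1) (Nat.succ_pos m)
        _ ≤ (2*(m+1)+2) * Nat.centralBinom (m+1) := Nat.mul_le_mul_right _ (by omega)
  rw [← succ_mul_catalan_eq_centralBinom] at h1
  nlinarith [catalan n, Nat.zero_le (catalan n)]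

lemma cat_ub (n : ℕ) : catalan n ≤ 4 ^ n := by
  have h1 : catalan n ≤ Nat.centralBinom n := by
    rw [← succ_mul_catalan_eq_centralBinom]
    exact Nat.le_mul_of_pos_left _ (Nat.succ_pos n)
  have h2 : Nat.centralBinom n ≤ 4 ^ n := by
    calc Nat.centralBinom n = (2*n).choose n := Nat.centralBinom_eq_two_mul_choose n
      _ ≤ ∑ m ∈ Finset.range (2*n+1), (2*n).choose m :=
          Finset.single_le_sum (f := fun m => (2*n).choose m) (fun i _ => Nat.zero_le _)
            (Finset.mem_range.mpr (by omega))
      _ = 2 ^ (2*n) := Nat.sum_range_choose (2*n)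
      _ = 4 ^ n := by rw [pow_mul]; norm_num
  exact h1.trans h2


open Finset in
lemma keyEq (h n : ℕ) (x : Fin h → ℝ) :
    ∑ ε : Fin h → Bool, (∑ j, (if ε j then x j else -x j)) ^ (2*n)
    = 2^h * ∑ m ∈ Finset.Nat.antidiagonalTuple h n,
        (Nat.multinomial Finset.univ (fun j => 2*m j) : ℝ) * ∏ j, x j ^ (2 * m j) := by
  classical
  have expand : ∀ ε : Fin h → Bool, (∑ j, (if ε j then x j else -x j)) ^ (2*n)
      = ∑ μ ∈ Finset.Nat.antidiagonalTuple h (2*n),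
          ((Nat.multinomial Finset.univ μ : ℝ) * ∏ j, x j ^ (μ j)) *
            ∏ j, (if ε j then (1:ℝ) else -1)^(μ j) := by
    intro ε
    rw [← Finset.piAntidiag_univ_fin_eq_antidiagonalTuple _ h,
      Finset.sum_pow_eq_sum_piAntidiag univ (fun j => if ε j then x j else -x j) (2*n)]
    refine Finset.sum_congr rfl fun μ _ => ?_
    have : ∀ j, (if ε j then x j else - x j) ^ (μ j)
        = x j ^ (μ j) * (if ε j then (1:ℝ) else -1)^(μ j) := by
      intro j
      by_cases hb : ε j
      · simp [hb]
      · rw [if_neg hb, if_neg hb, neg_eq_neg_one_mul, mul_pow, mul_comm]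
    rw [Finset.prod_congr rfl fun j _ => this j, Finset.prod_mul_distrib]
    ring
  simp_rw [expand]
  rw [Finset.sum_comm]
  have inner : ∀ μ : Fin h → ℕ,
      ∑ ε : Fin h → Bool, ∏ j, (if ε j then (1:ℝ) else -1)^(μ j)
      = ∏ j, (1 + (-1:ℝ)^(μ j)) := by
    intro μ
    rw [← Fintype.prod_sum (f := fun (j : Fin h) (b : Bool) => (if b then (1:ℝ) else -1)^(μ j))]
    refine Finset.prod_congr rfl fun j _ => ?_
    rw [Fintype.sum_bool]
    simp
  have step : (∑ μ ∈ Finset.Nat.antidiagonalTuple h (2*n),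
      ∑ ε : Fin h → Bool, ((Nat.multinomial Finset.univ μ : ℝ) * ∏ j, x j ^ (μ j)) *
        ∏ j, (if ε j then (1:ℝ) else -1)^(μ j))
      = ∑ μ ∈ Finset.Nat.antidiagonalTuple h (2*n),
        ((Nat.multinomial Finset.univ μ : ℝ) * ∏ j, x j ^ (μ j)) * ∏ j, (1 + (-1:ℝ)^(μ j)) := by
    refine Finset.sum_congr rfl fun μ _ => ?_
    rw [← Finset.mul_sum, inner μ]
  rw [step]
  -- restrict to even tuples
  rw [← Finset.sum_filter_of_ne (p := fun μ => ∀ j, Even (μ j))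
    (by
      intro μ _ hne j
      by_contra hodd
      apply hne
      have : (1 + (-1:ℝ)^(μ j)) = 0 := by
        rw [(Nat.odd_iff.mpr (Nat.not_even_iff.mp hodd)).neg_one_pow]; ring
      rw [Finset.prod_eq_zero (f := fun j => (1:ℝ) + (-1)^(μ j)) (Finset.mem_univ j) this, mul_zero])]
  rw [Finset.mul_sum]
  refine Finset.sum_nbij' (fun μ => fun j => μ j / 2) (fun m => fun j => 2 * m j) ?_ ?_ ?_ ?_ ?_
  · intro μ hμ
    simp only [Finset.mem_filter, Finset.Nat.mem_antidiagonalTuple] at hμ ⊢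
    obtain ⟨hsum, heven⟩ := hμ
    have : ∀ j, 2 * (μ j / 2) = μ j := fun j => Nat.two_mul_div_two_of_even (heven j)
    have h2 : 2 * ∑ j, μ j / 2 = 2 * n := by
      rw [Finset.mul_sum]; rw [Finset.sum_congr rfl fun j _ => this j]; exact hsum
    omega
  · intro m hm
    simp only [Finset.mem_filter, Finset.Nat.mem_antidiagonalTuple] at hm ⊢
    exact ⟨by rw [← Finset.mul_sum, hm], fun j => ⟨m j, by ring⟩⟩
  · intro μ hμ
    simp only [Finset.mem_filter] at hμ
    funext j
    exact Nat.two_mul_div_two_of_even (hμ.2 j)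
  · intro m _
    funext j
    show 2 * m j / 2 = m j
    omega
  · intro μ hμ
    simp only [Finset.mem_filter] at hμ
    have heq : ∀ j, 2 * (μ j / 2) = μ j := fun j => Nat.two_mul_div_two_of_even (hμ.2 j)
    have : ∏ j, (1 + (-1:ℝ)^(μ j)) = 2^h := by
      rw [Finset.prod_congr rfl (g := fun _ => (2:ℝ)) (fun j _ => by
        rw [(hμ.2 j).neg_one_pow]; norm_num)]
      simp
    rw [this]
    have h1 : (fun j => 2 * (μ j / 2)) = μ := funext heq
    rw [h1]
    have h2 : (fun j => x j ^ (2 * (μ j / 2))) = fun j => x j ^ (μ j) := by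
      funext j; rw [heq j]
    simp_rw [heq]
    ring

lemma evenSum_lb (p n : ℕ) (x : Fin (p+1) → ℝ) :
    2 * (∑ j, x j)^(2*n) ≤ 2^(p+1) * ∑ m ∈ Finset.Nat.antidiagonalTuple (p+1) n,
        (Nat.multinomial Finset.univ (fun j => 2*m j) : ℝ) * ∏ j, x j ^ (2 * m j) := by
  rw [← keyEq]
  have hab : (fun _ : Fin (p+1) => true) ≠ (fun _ => false) := by
    intro hfe
    simpa using congrFun hfe 0
  have hsub : ({(fun _ : Fin (p+1) => true), (fun _ => false)} : Finset (Fin (p+1) → Bool))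
      ⊆ Finset.univ := Finset.subset_univ _
  have hnn : ∀ ε ∈ (Finset.univ : Finset (Fin (p+1) → Bool)),
      ε ∉ ({(fun _ : Fin (p+1) => true), (fun _ => false)} : Finset (Fin (p+1) → Bool)) →
      0 ≤ (∑ j, (if ε j then x j else -x j)) ^ (2*n) := by
    intro ε _ _
    rw [pow_mul]
    exact pow_nonneg (sq_nonneg _) n
  refine le_trans (le_of_eq ?_) (Finset.sum_le_sum_of_subset_of_nonneg hsub hnn)
  rw [Finset.sum_pair hab]
  have h1 : (∑ j, (if (true:Bool) = true then x j else -x j)) = ∑ j, x j := by simp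
  have h2 : (∑ j, (if (false:Bool) = true then x j else -x j)) = -∑ j, x j := by simp
  rw [h1, h2, Even.neg_pow (even_two_mul n)]
  ring

lemma evenSum_ub (p n : ℕ) (x : Fin (p+1) → ℝ) (hx : ∀ j, 0 ≤ x j) :
    ∑ m ∈ Finset.Nat.antidiagonalTuple (p+1) n,
        (Nat.multinomial Finset.univ (fun j => 2*m j) : ℝ) * ∏ j, x j ^ (2 * m j)
      ≤ (∑ j, x j)^(2*n) := by
  have hpos : (0:ℝ) < 2^(p+1) := by positivity
  rw [← mul_le_mul_iff_right₀ hpos, ← keyEq]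
  have hbound : ∀ ε : Fin (p+1) → Bool,
      (∑ j, (if ε j then x j else -x j)) ^ (2*n) ≤ (∑ j, x j)^(2*n) := by
    intro ε
    have habs : |∑ j, (if ε j then x j else -x j)| ≤ ∑ j, x j := by
      refine (Finset.abs_sum_le_sum_abs _ _).trans ?_
      refine Finset.sum_le_sum fun j _ => ?_
      by_cases hb : ε j <;> simp [hb, abs_le, hx j, abs_of_nonneg (hx j)]
    calc (∑ j, (if ε j then x j else -x j)) ^ (2*n)
        = |∑ j, (if ε j then x j else -x j)| ^ (2*n) := (Even.pow_abs (even_two_mul n) _).symm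
      _ ≤ (∑ j, x j)^(2*n) := pow_le_pow_left₀ (abs_nonneg _) habs _
  calc ∑ ε : Fin (p+1) → Bool, (∑ j, (if ε j then x j else -x j)) ^ (2*n)
      ≤ ∑ _ε : Fin (p+1) → Bool, (∑ j, x j)^(2*n) := Finset.sum_le_sum fun ε _ => hbound ε
    _ = 2^(p+1) * (∑ j, x j)^(2*n) := by
        rw [Finset.sum_const, nsmul_eq_mul, Finset.card_univ]
        norm_num

/-- **Exponential growth rate of the tree-like-walk count (odd `r`).** Fix an odd `r ≥ 1` and
positive reals `δ⁽⁰⁾, …, δ⁽ʳ⁾`.  For `k ≥ 1` let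
`T_k = ∑ binom(2k-2; 2n₀,…,2n_{(r-1)/2}) ∏_j C_{n_j} (δ⁽ʲ⁾δ⁽ʳ⁻ʲ⁾)^{n_j}`,
the sum running over tuples of nonnegative integers summing to `k-1`, with `C_n` the `n`-th
Catalan number.  Then `limsup_k T_k^{1/(2k)} ≥ ∑_{j=0}^r √(δ⁽ʲ⁾δ⁽ʳ⁻ʲ⁾)`. -/
theorem stmt_19 (r : ℕ) (hr : Odd r) (hr1 : 1 ≤ r)
    (δ : ℕ → ℝ) (hδ : ∀ j ≤ r, 0 < δ j)
    (T : ℕ → ℝ)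
    (hT : ∀ k : ℕ, 1 ≤ k →
      T k = ∑ m ∈ Finset.Nat.antidiagonalTuple ((r - 1) / 2 + 1) (k - 1),
        (Nat.multinomial Finset.univ (fun j => 2 * m j) : ℝ) *
          ∏ j : Fin ((r - 1) / 2 + 1),
            (catalan (m j) : ℝ) * (δ (j : ℕ) * δ (r - (j : ℕ))) ^ (m j)) :
    ∑ j ∈ Finset.range (r + 1), Real.sqrt (δ j * δ (r - j)) ≤
      Filter.limsup (fun k : ℕ => T k ^ (1 / (2 * (k : ℝ)))) Filter.atTop := by
  obtain ⟨p, rfl⟩ := hr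
  have hp : (2*p+1-1)/2 = p := by omega
  conv at hT => rw [hp]
  set a : ℕ → ℝ := fun j => Real.sqrt (δ j * δ (2*p+1 - j)) with ha
  set S : ℝ := ∑ j ∈ Finset.range (2*p+1 + 1), a j with hSdef
  set x : Fin (p+1) → ℝ := fun j => 2 * a j with hx
  set d : Fin (p+1) → ℝ := fun j => δ j * δ (2*p+1 - (j:ℕ)) with hd
  have hdpos : ∀ j : Fin (p+1), 0 < d j := by
    intro j
    have hj : (j:ℕ) ≤ 2*p+1 := by omega
    exact mul_pos (hδ _ hj) (hδ _ (by omega))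
  have hxnn : ∀ j : Fin (p+1), 0 ≤ x j := fun j => by positivity
  have hx2 : ∀ j : Fin (p+1), x j ^ 2 = 4 * d j := by
    intro j
    rw [hx]
    simp only
    rw [mul_pow, Real.sq_sqrt (hdpos j).le]
    norm_num
  -- symmetry: S = ∑ x
  have hS : S = ∑ j : Fin (p+1), x j := by
    have hsplit : S = (∑ j ∈ Finset.range (p+1), a j) + ∑ j ∈ Finset.Ico (p+1) (2*p+2), a j := by
      rw [hSdef, Finset.range_eq_Ico, ← Finset.sum_Ico_consecutive _ (Nat.zero_le (p+1)) (by omega : p+1 ≤ 2*p+1+1), ← Finset.range_eq_Ico]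
    have hrefl : ∑ j ∈ Finset.Ico (p+1) (2*p+2), a j = ∑ j ∈ Finset.range (p+1), a j := by
      refine Finset.sum_nbij' (fun j => 2*p+1-j) (fun j => 2*p+1-j) ?_ ?_ ?_ ?_ ?_
      · intro j hj; simp only [Finset.mem_Ico] at hj; simp only [Finset.mem_range]; omega
      · intro j hj; simp only [Finset.mem_range] at hj; simp only [Finset.mem_Ico]; omega
      · intro j hj; simp only [Finset.mem_Ico] at hj
        show 2*p+1 - (2*p+1 - j) = j; omega
      · intro j hj; simp only [Finset.mem_range] at hj
        show 2*p+1 - (2*p+1 - j) = j; omega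
      · intro j hj
        simp only [Finset.mem_Ico] at hj
        rw [ha]
        simp only
        rw [show 2*p+1 - (2*p+1-j) = j by omega, mul_comm]
    rw [hsplit, hrefl, ← two_mul, Finset.mul_sum,
      ← Fin.sum_univ_eq_sum_range (fun j => 2 * a j) (p+1)]
  have hSpos : 0 < S := by
    rw [hS]
    refine Finset.sum_pos (fun j _ => ?_) Finset.univ_nonempty
    exact mul_pos two_pos (Real.sqrt_pos.mpr (hdpos j))
  set D : ℕ → ℝ := fun k => (2:ℝ)^(p+1) * (2*(k:ℝ))^(2*(p+1)) with hD
  have hDpos : ∀ k : ℕ, 1 ≤ k → 0 < D k := by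
    intro k hk
    have hkR : (0:ℝ) < (k:ℝ) := by exact_mod_cast hk
    rw [hD]
    positivity
  set B : ℕ → ℝ := fun k => 2 * S^(2*(k-1)) / D k with hB
  have hBpos : ∀ k : ℕ, 1 ≤ k → 0 < B k := by
    intro k hk
    rw [hB]
    exact div_pos (by positivity) (hDpos k hk)
  have hTlb : ∀ k : ℕ, 1 ≤ k → B k ≤ T k := by
    intro k hk
    rw [hB]
    simp only
    rw [div_le_iff₀ (hDpos k hk)]
    have e1 := evenSum_lb p (k-1) x
    rw [← hS] at e1
    have e2 : ∑ m ∈ Finset.Nat.antidiagonalTuple (p+1) (k-1),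
        (Nat.multinomial Finset.univ (fun j => 2*m j) : ℝ) * ∏ j, x j ^ (2 * m j)
        ≤ (2*(k:ℝ))^(2*(p+1)) * T k := by
      rw [hT k hk, Finset.mul_sum]
      refine Finset.sum_le_sum fun m hm => ?_
      have hmj : ∀ j, m j ≤ k - 1 := by
        intro j
        calc m j ≤ ∑ i, m i :=
              Finset.single_le_sum (fun i _ => Nat.zero_le _) (Finset.mem_univ j)
          _ = k-1 := Finset.Nat.mem_antidiagonalTuple.mp hm
      have hprod : ∏ j, x j ^ (2 * m j)
          ≤ ∏ j, ((2*(k:ℝ))^2 * ((catalan (m j) : ℝ) * d j ^ (m j))) := by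
        refine Finset.prod_le_prod (fun j _ => pow_nonneg (hxnn j) _) fun j _ => ?_
        rw [pow_mul, hx2 j, mul_pow]
        have hc : (4:ℝ)^(m j) ≤ (2*(k:ℝ))^2 * (catalan (m j):ℝ) := by
          have h2 : ((4:ℕ):ℝ)^(m j) ≤ (((2*(m j)+2)^2 * catalan (m j) : ℕ):ℝ) := by
            exact_mod_cast cat_lb (m j)
          push_cast at h2
          have h3 : ((2*(m j)+2:ℝ))^2 ≤ (2*(k:ℝ))^2 := by
            have h4 : ((m j):ℝ) + 1 ≤ (k:ℝ) := by
              exact_mod_cast (by have := hmj j; omega : m j + 1 ≤ k)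
            nlinarith [(Nat.cast_nonneg (m j) : (0:ℝ) ≤ (m j:ℝ))]
          nlinarith [(Nat.cast_nonneg (catalan (m j)) : (0:ℝ) ≤ (catalan (m j):ℝ)), sq_nonneg (2*((m j):ℝ)+2)]
        calc (4:ℝ)^(m j) * d j^(m j)
            ≤ ((2*(k:ℝ))^2 * (catalan (m j):ℝ)) * d j^(m j) :=
              mul_le_mul_of_nonneg_right hc (pow_nonneg (hdpos j).le _)
          _ = (2*(k:ℝ))^2 * ((catalan (m j):ℝ) * d j ^ (m j)) := by ring
      calc (Nat.multinomial Finset.univ (fun j => 2*m j) : ℝ) * ∏ j, x j ^ (2 * m j)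
          ≤ (Nat.multinomial Finset.univ (fun j => 2*m j) : ℝ) *
              ∏ j, ((2*(k:ℝ))^2 * ((catalan (m j) : ℝ) * d j ^ (m j))) :=
            mul_le_mul_of_nonneg_left hprod (Nat.cast_nonneg _)
        _ = (2*(k:ℝ))^(2*(p+1)) * ((Nat.multinomial Finset.univ (fun j => 2*m j) : ℝ) *
              ∏ j, ((catalan (m j) : ℝ) * d j ^ (m j))) := by
            rw [Finset.prod_mul_distrib, Finset.prod_const, Finset.card_univ, Fintype.card_fin,
              ← pow_mul]
            ring
    calc 2 * S^(2*(k-1)) ≤ 2^(p+1) * ∑ m ∈ Finset.Nat.antidiagonalTuple (p+1) (k-1),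
          (Nat.multinomial Finset.univ (fun j => 2*m j) : ℝ) * ∏ j, x j ^ (2 * m j) := e1
      _ ≤ 2^(p+1) * ((2*(k:ℝ))^(2*(p+1)) * T k) :=
          mul_le_mul_of_nonneg_left e2 (by positivity)
      _ = T k * D k := by rw [hD]; ring
  have hTub : ∀ k : ℕ, 1 ≤ k → T k ≤ S^(2*(k-1)) := by
    intro k hk
    rw [hT k hk, hS]
    refine le_trans ?_ (evenSum_ub p (k-1) x hxnn)
    refine Finset.sum_le_sum fun m hm => ?_
    refine mul_le_mul_of_nonneg_left ?_ (Nat.cast_nonneg _)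
    refine Finset.prod_le_prod
      (fun j _ => mul_nonneg (Nat.cast_nonneg _) (pow_nonneg (hdpos j).le _)) fun j _ => ?_
    conv_rhs => rw [pow_mul, hx2 j, mul_pow]
    have hc : (catalan (m j):ℝ) ≤ 4^(m j) := by exact_mod_cast cat_ub (m j)
    exact mul_le_mul_of_nonneg_right hc (pow_nonneg (hdpos j).le _)
  -- the lower-bound sequence and its limit
  set L : ℕ → ℝ := fun k => B k ^ (1/(2*(k:ℝ))) with hLdef
  have hloge : ∀ k : ℕ, 1 ≤ k → Real.log (L k) =
      Real.log 2 * (1/(2*(k:ℝ))) - ((p:ℝ)+1) * Real.log 2 * (1/(2*(k:ℝ)))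
        - (2*((p:ℝ)+1)) * (Real.log (2*(k:ℝ)) / (2*(k:ℝ)))
        + (1 - 2 * (1/(2*(k:ℝ)))) * Real.log S := by
    intro k hk
    have hkR : (0:ℝ) < k := by exact_mod_cast hk
    rw [hLdef]
    simp only
    rw [Real.log_rpow (hBpos k hk), hB]
    simp only
    rw [Real.log_div (by positivity) (ne_of_gt (hDpos k hk)),
      Real.log_mul two_ne_zero (by positivity), Real.log_pow, hD]
    simp only
    rw [Real.log_mul (by positivity) (by positivity), Real.log_pow, Real.log_pow]
    have hcast : ((2*(k-1):ℕ):ℝ) = 2*((k:ℝ)-1) := by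
      have : ((k - 1 : ℕ):ℝ) = (k:ℝ) - 1 := by
        push_cast [hk]
        ring
      push_cast [this]
      ring
    rw [hcast]
    push_cast
    field_simp
    ring
  have h2k : Filter.Tendsto (fun k : ℕ => 2*(k:ℝ)) Filter.atTop Filter.atTop :=
    (tendsto_natCast_atTop_atTop).const_mul_atTop two_pos
  have he0 : Filter.Tendsto (fun k : ℕ => 1/(2*(k:ℝ))) Filter.atTop (nhds 0) := by
    simpa only [one_div, Pi.inv_def, Pi.inv_apply] using h2k.inv_tendsto_atTop
  have hlt : Filter.Tendsto (fun k : ℕ => Real.log (2*(k:ℝ)) / (2*(k:ℝ)))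
      Filter.atTop (nhds 0) :=
    (Real.isLittleO_log_id_atTop.tendsto_div_nhds_zero).comp h2k
  have hg : Filter.Tendsto (fun k : ℕ =>
      Real.log 2 * (1/(2*(k:ℝ))) - ((p:ℝ)+1) * Real.log 2 * (1/(2*(k:ℝ)))
        - (2*((p:ℝ)+1)) * (Real.log (2*(k:ℝ)) / (2*(k:ℝ)))
        + (1 - 2 * (1/(2*(k:ℝ)))) * Real.log S) Filter.atTop (nhds (Real.log S)) := by
    have ht := (((he0.const_mul (Real.log 2)).sub
        (he0.const_mul (((p:ℝ)+1) * Real.log 2))).sub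
        (hlt.const_mul (2*((p:ℝ)+1)))).add
        (((he0.const_mul 2).const_sub 1).mul_const (Real.log S))
    simp only [mul_zero, sub_zero, zero_sub, neg_zero, add_zero, zero_add, one_mul] at ht
    convert ht using 2 <;> ring
  have hlogL : Filter.Tendsto (fun k : ℕ => Real.log (L k)) Filter.atTop
      (nhds (Real.log S)) := by
    refine hg.congr' ?_
    filter_upwards [Filter.eventually_ge_atTop 1] with k hk
    exact (hloge k hk).symm
  have hLlim : Filter.Tendsto L Filter.atTop (nhds S) := by
    have h1 := (Real.continuous_exp.tendsto _).comp hlogL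
    rw [Real.exp_log hSpos] at h1
    refine h1.congr' ?_
    filter_upwards [Filter.eventually_ge_atTop 1] with k hk
    exact Real.exp_log (Real.rpow_pos_of_pos (hBpos k hk) _)
  -- assemble
  have hev : (fun k : ℕ => L k) ≤ᶠ[Filter.atTop] (fun k : ℕ => T k ^ (1/(2*(k:ℝ)))) := by
    filter_upwards [Filter.eventually_ge_atTop 1] with k hk
    exact Real.rpow_le_rpow (hBpos k hk).le (hTlb k hk) (by positivity)
  have hub : ∀ᶠ k : ℕ in Filter.atTop, T k ^ (1/(2*(k:ℝ))) ≤ max 1 S := by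
    filter_upwards [Filter.eventually_ge_atTop 1] with k hk
    have hT0 : 0 ≤ T k := le_trans (hBpos k hk).le (hTlb k hk)
    have h1 : T k ^ (1/(2*(k:ℝ))) ≤ (S^(2*(k-1))) ^ (1/(2*(k:ℝ))) :=
      Real.rpow_le_rpow hT0 (hTub k hk) (by positivity)
    refine h1.trans ?_
    rw [← Real.rpow_natCast S (2*(k-1)), ← Real.rpow_mul hSpos.le]
    have hq0 : 0 ≤ ((2*(k-1):ℕ):ℝ) * (1/(2*(k:ℝ))) := by positivity
    have hq1 : ((2*(k-1):ℕ):ℝ) * (1/(2*(k:ℝ))) ≤ 1 := by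
      have hkR : (0:ℝ) < 2*(k:ℝ) := by
        have : (0:ℝ) < (k:ℝ) := by exact_mod_cast hk
        linarith
      rw [mul_one_div, div_le_one hkR]
      exact_mod_cast (by omega : 2*(k-1) ≤ 2*k)
    rcases le_total S 1 with hS1 | hS1
    · exact le_max_of_le_left (Real.rpow_le_one hSpos.le hS1 hq0)
    · refine le_max_of_le_right ?_
      calc S ^ (((2*(k-1):ℕ):ℝ) * (1/(2*(k:ℝ)))) ≤ S ^ (1:ℝ) :=
            Real.rpow_le_rpow_of_exponent_le hS1 hq1
        _ = S := Real.rpow_one S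
  have hbdd : Filter.IsBoundedUnder (· ≤ ·) Filter.atTop
      (fun k : ℕ => T k ^ (1/(2*(k:ℝ)))) :=
    Filter.isBoundedUnder_of_eventually_le hub
  have hcob : Filter.IsCoboundedUnder (· ≤ ·) Filter.atTop L :=
    (hLlim.isBoundedUnder_ge).isCoboundedUnder_le
  calc S = Filter.limsup L Filter.atTop := hLlim.limsup_eq.symm
    _ ≤ Filter.limsup (fun k : ℕ => T k ^ (1/(2*(k:ℝ)))) Filter.atTop :=
        Filter.limsup_le_limsup hev hcob hbdd
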